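/- Let 0 < μ < 1, let P ≠ E be points in ℝ², and let u be any unit vector (the evader's heading). Then there exists a unique r > 0 such that dist(P, E + (μ r) • u) = r. Consequently, for every evader heading, the evader's forward ray intersects the Apollonius circle of (P, E, μ) in exactly one point, so the pursuer can always intercept the slower evader. -/

import Mathlib

/-- **Guaranteed interception of a slower evader.** For `0 < μ < 1`, `P ≠ E`,
and any unit heading `u` of the evader, there is a unique `r > 0` with
`dist P (E + (μ r) • u) = r`: the evader's forward ray meets the Apollonius
circle of `(P, E, μ)` in exactly one point, so the pursuer can always
intercept the slower evader. -/
theorem evader_ray_meets_apollonius_uniquely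
    (μ : ℝ) (hμ0 : 0 < μ) (hμ1 : μ < 1)
    (P E : EuclideanSpace ℝ (Fin 2)) (hPE : P ≠ E)
    (u : EuclideanSpace ℝ (Fin 2)) (hu : ‖u‖ = 1) :
    ∃! r : ℝ, 0 < r ∧ dist P (E + (μ * r) • u) = r := by
  have ha : (0:ℝ) < 1 - μ^2 := by nlinarith
  set v : EuclideanSpace ℝ (Fin 2) := E - P with hv
  have hc : 0 < ‖v‖ := by
    rw [hv, norm_pos_iff, sub_ne_zero]
    exact fun h => hPE h.symm
  set b : ℝ := inner ℝ v u with hb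
  -- the squared-distance formula
  have key : ∀ r : ℝ, dist P (E + (μ * r) • u) ^ 2
      = ‖v‖^2 + 2 * (μ * r) * b + (μ * r)^2 := by
    intro r
    have h1 : E + (μ * r) • u - P = v + (μ * r) • u := by
      rw [hv]; abel
    rw [dist_comm, dist_eq_norm, h1, @norm_add_sq_real, real_inner_smul_right,
      norm_smul, hu]
    rw [← hb, mul_one, Real.norm_eq_abs, sq_abs]
    ring
  -- characterization for positive r
  have char : ∀ r : ℝ, 0 < r →
      (dist P (E + (μ * r) • u) = r ↔
        (1 - μ^2) * r^2 - 2 * μ * b * r - ‖v‖^2 = 0) := by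
    intro r hr
    constructor
    · intro h
      have := key r
      rw [h] at this
      nlinarith [this]
    · intro h
      have h2 : dist P (E + (μ * r) • u) ^ 2 = r ^ 2 := by
        rw [key r]; nlinarith
      have hd : 0 ≤ dist P (E + (μ * r) • u) := dist_nonneg
      nlinarith [h2, hd, hr]
  set D : ℝ := (μ * b)^2 + (1 - μ^2) * ‖v‖^2 with hD
  have hDpos : 0 < D := by positivity
  set s : ℝ := Real.sqrt D with hs
  have hs2 : s^2 = D := Real.sq_sqrt hDpos.le
  have hD2 : (μ * b)^2 < D := by
    rw [hD]; nlinarith [mul_pos ha (pow_pos hc 2)]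
  have habs : |μ * b| < s := by
    rw [hs, ← Real.sqrt_sq_eq_abs]
    exact Real.sqrt_lt_sqrt (sq_nonneg _) hD2
  obtain ⟨hlo, hhi⟩ := abs_lt.mp habs
  refine ⟨(μ * b + s) / (1 - μ^2), ⟨?_, ?_⟩, ?_⟩
  · apply div_pos _ ha; linarith
  · rw [char _ (div_pos (by linarith) ha)]
    field_simp
    nlinarith [hs2]
  · rintro r ⟨hr, hdr⟩
    rw [char r hr] at hdr
    -- r is a positive root of the quadratic; show it equals the given one
    have hroot : (1 - μ^2) * r = μ * b + s ∨ (1 - μ^2) * r = μ * b - s := by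
      have : ((1 - μ^2) * r - (μ * b + s)) * ((1 - μ^2) * r - (μ * b - s)) = 0 := by
        nlinarith [hs2]
      rcases mul_eq_zero.mp this with h | h
      · left; linarith
      · right; linarith
    rcases hroot with h | h
    · rw [eq_div_iff ha.ne']
      linarith
    · exfalso
      have : 0 < (1 - μ^2) * r := mul_pos ha hr
      linarith
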